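/- arXiv:1705.06018 — 2 statements merged into one kernel-verified Lean document; each statement's English description precedes it below -/
import Mathlib

section
/- For every positive integer n and every integer x, the formal power series identity e^{W(q)x}/(1-W(q))^n = \sum_{k\geq 0} ( \sum_{m=0}^{k} C(k-m+n-2, n-2) (k+x)^m/m! ) q^k holds, where W(q)=\sum_{n\geq 1} n^{n-1}q^n/n!. -/
open PowerSeries Finset

lemma fwdDiff_pow_apply (i : ℕ) :
    fwdDiff (1:ℚ) (fun y : ℚ => y ^ i) = fun y => ∑ t ∈ range i, (i.choose t : ℚ) * y ^ t := by
  funext y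
  show (y + 1) ^ i - y ^ i = _
  rw [add_pow, Finset.sum_range_succ]
  simp [mul_comm]

lemma fwdDiff_iter_pow_eq_zero : ∀ (k : ℕ), ∀ i < k,
    (fwdDiff (1:ℚ))^[k] (fun y : ℚ => y ^ i) = 0 := by
  intro k
  induction k with
  | zero => intro i hi; omega
  | succ k IH =>
    intro i hi
    rw [Function.iterate_succ_apply, fwdDiff_pow_apply]
    have : (fun y : ℚ => ∑ t ∈ range i, (i.choose t : ℚ) * y ^ t)
        = ∑ t ∈ range i, (i.choose t : ℚ) • (fun y : ℚ => y ^ t) := by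
      funext y; simp [smul_eq_mul]
    rw [this, fwdDiff_iter_finset_sum]
    apply Finset.sum_eq_zero
    intro t ht
    rw [fwdDiff_iter_const_smul, IH t (by simp at ht; omega)]
    simp

/-- Alternating sum identity: k-th finite difference of a polynomial of degree `< k` vanishes. -/
lemma asi (k i : ℕ) (hik : i < k) (z : ℚ) :
    ∑ j ∈ range (k + 1), (-1 : ℚ) ^ (k - j) * (k.choose j : ℚ) * (z + j) ^ i = 0 := by
  have h := fwdDiff_iter_eq_sum_shift (h := (1:ℚ)) (fun y : ℚ => y ^ i) k z
  rw [fwdDiff_iter_pow_eq_zero k i hik] at h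
  simp only [Pi.zero_apply] at h
  rw [eq_comm] at h
  rw [← h]
  apply Finset.sum_congr rfl
  intro j hj
  rw [zsmul_eq_mul]
  push_cast
  ring

def gq (j : ℕ) (x : ℚ) : ℚ := if j = 0 then 1 else x * (x + j) ^ (j - 1)

lemma nat_id (k j : ℕ) (hj : j ≤ k) :
    (k + 1 - j) * ((k + 1).choose j) = (k + 1) * k.choose j := by
  have h1 : (k + 1).choose j = (k + 1).choose (k + 1 - j) := (Nat.choose_symm (by omega)).symm
  have h2 : k + 1 - j = (k - j) + 1 := by omega
  have h3 := Nat.add_one_mul_choose_eq k (k - j)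
  have h4 : k.choose (k - j) = k.choose j := Nat.choose_symm hj
  rw [h1, h2, ← h4, mul_comm]
  exact h3.symm

lemma poly_eq_of_deriv_eq {P Q : Polynomial ℚ}
    (h : Polynomial.derivative P = Polynomial.derivative Q)
    (a : ℚ) (ha : P.eval a = Q.eval a) : P = Q := by
  have hd : Polynomial.derivative (P - Q) = 0 := by rw [map_sub, h, sub_self]
  have h2 : P - Q = Polynomial.C ((P - Q).coeff 0) := Polynomial.eq_C_of_derivative_eq_zero hd
  have h3 : Polynomial.eval a (P - Q) = (P - Q).coeff 0 := by
    conv_lhs => rw [h2]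
    simp
  rw [Polynomial.eval_sub, ha, sub_self] at h3
  rw [← h3, map_zero, sub_eq_zero] at h2
  exact h2

lemma abel1 : ∀ (k : ℕ) (x y : ℚ),
    ∑ j ∈ range (k + 1), (k.choose j : ℚ) * gq j x * (y + ((k - j : ℕ) : ℚ)) ^ (k - j)
      = (x + y + k) ^ k := by
  intro k
  induction k with
  | zero => intro x y; simp [gq]
  | succ k IH =>
    intro x y
    have hKc : ((k:ℚ) + 1) = ((k+1 : ℕ) : ℚ) := by push_cast; ring
    set P : Polynomial ℚ := ∑ j ∈ range (k + 2),
      Polynomial.C (((k+1).choose j : ℚ) * gq j x) *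
        (Polynomial.X + Polynomial.C ((k + 1 - j : ℕ) : ℚ)) ^ (k + 1 - j) with hP
    set Q : Polynomial ℚ := (Polynomial.X + Polynomial.C (x + (k+1 : ℕ))) ^ (k+1) with hQ
    have hPeval : ∀ z : ℚ, P.eval z = ∑ j ∈ range (k + 2),
        ((k+1).choose j : ℚ) * gq j x * (z + ((k + 1 - j : ℕ) : ℚ)) ^ (k + 1 - j) := by
      intro z; rw [hP, Polynomial.eval_finset_sum]; simp
    have hQeval : ∀ z : ℚ, Q.eval z = (x + z + (k+1:ℕ)) ^ (k+1) := by
      intro z; rw [hQ]; simp; ring_nf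
    have hPQ : P = Q := by
      apply poly_eq_of_deriv_eq (a := -x - (k+1:ℕ))
      · apply Polynomial.funext
        intro z
        have hdP : (Polynomial.derivative P).eval z
            = ∑ j ∈ range (k + 2), ((k+1).choose j : ℚ) * gq j x *
                (((k + 1 - j : ℕ) : ℚ) * (z + ((k + 1 - j : ℕ) : ℚ)) ^ (k + 1 - j - 1)) := by
          rw [hP, Polynomial.derivative_sum, Polynomial.eval_finset_sum]
          apply Finset.sum_congr rfl
          intro j hj
          rw [Polynomial.derivative_C_mul, Polynomial.derivative_X_add_C_pow]
          simp
        have hdQ : (Polynomial.derivative Q).eval z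
            = ((k+1:ℕ) : ℚ) * (z + (x + (k+1:ℕ))) ^ k := by
          rw [hQ, Polynomial.derivative_X_add_C_pow]
          simp
        rw [hdP, hdQ]
        -- peel off the last (j = k+1) term, which vanishes
        rw [Finset.sum_range_succ]
        simp only [Nat.sub_self, Nat.cast_zero, zero_mul, mul_zero, add_zero]
        -- rewrite each term
        have hterm : ∀ j ∈ range (k + 1),
            ((k+1).choose j : ℚ) * gq j x *
              (((k + 1 - j : ℕ) : ℚ) * (z + ((k + 1 - j : ℕ) : ℚ)) ^ (k + 1 - j - 1))
            = ((k+1:ℕ):ℚ) * ((k.choose j : ℚ) * gq j x *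
                ((z+1) + ((k - j : ℕ) : ℚ)) ^ (k - j)) := by
          intro j hj
          simp only [Finset.mem_range] at hj
          have hjk : j ≤ k := by omega
          have e1 : ((k + 1 - j : ℕ) : ℚ) * ((k+1).choose j : ℚ) = ((k+1:ℕ):ℚ) * (k.choose j : ℚ) := by
            rw [← Nat.cast_mul, ← Nat.cast_mul, nat_id k j hjk]
          have e2 : k + 1 - j - 1 = k - j := by omega
          have e3 : ((k + 1 - j : ℕ) : ℚ) = ((k - j : ℕ) : ℚ) + 1 := by
            rw [Nat.cast_sub (by omega), Nat.cast_sub hjk]; push_cast; ring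
          rw [e2, e3]
          calc ((k+1).choose j : ℚ) * gq j x * ((((k - j : ℕ) : ℚ) + 1) * (z + (((k - j : ℕ) : ℚ) + 1)) ^ (k - j))
              = (((k - j : ℕ) : ℚ) + 1) * ((k+1).choose j : ℚ) * (gq j x * ((z + 1) + ((k - j : ℕ) : ℚ)) ^ (k - j)) := by ring
            _ = _ := by
                rw [← e3, e1]; ring
        rw [Finset.sum_congr rfl hterm, ← Finset.mul_sum, IH x (z+1)]
        have : x + (z + 1) + (k:ℚ) = z + (x + ((k+1:ℕ):ℚ)) := by push_cast; ring
        rw [this]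
      · -- evaluation at a = -x - (k+1)
        rw [hPeval, hQeval]
        have hz : x + (-x - ((k+1:ℕ):ℚ)) + ((k+1:ℕ):ℚ) = 0 := by ring
        rw [hz, zero_pow (by omega)]
        have hterm : ∀ j ∈ range (k + 2),
            ((k+1).choose j : ℚ) * gq j x * ((-x - ((k+1:ℕ):ℚ)) + ((k + 1 - j : ℕ) : ℚ)) ^ (k + 1 - j)
            = x * ((-1 : ℚ) ^ (k + 1 - j) * ((k+1).choose j : ℚ) * (x + j) ^ k) := by
          intro j hj
          simp only [Finset.mem_range] at hj
          have hjk : j ≤ k + 1 := by omega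
          have e1 : (-x - ((k+1:ℕ):ℚ)) + ((k + 1 - j : ℕ) : ℚ) = -(x + j) := by
            rw [Nat.cast_sub hjk]; push_cast; ring
          rw [e1, neg_pow]
          rcases Nat.eq_zero_or_pos j with hj0 | hj0
          · subst hj0
            simp only [gq, if_pos rfl]
            have : (x + (0:ℕ)) ^ (k + 1 - 0) = (x + (0:ℕ)) * (x + (0:ℕ)) ^ k := by
              rw [← pow_succ']
              norm_num
            rw [this]
            push_cast
            ring
          · have hj0' : j ≠ 0 := by omega
            simp only [gq, if_neg hj0']
            have : (x + j) ^ (j - 1) * (x + j) ^ (k + 1 - j) = (x + j) ^ k := by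
              rw [← pow_add]
              congr 1
              omega
            calc ((k+1).choose j : ℚ) * (x * (x + j) ^ (j-1)) * ((-1:ℚ) ^ (k+1-j) * (x + j) ^ (k+1-j))
                = x * ((-1 : ℚ) ^ (k + 1 - j) * ((k+1).choose j : ℚ) * ((x + j) ^ (j-1) * (x+j) ^ (k+1-j))) := by ring
              _ = _ := by rw [this]
        rw [Finset.sum_congr rfl hterm, ← Finset.mul_sum]
        have := asi (k+1) k (by omega) x
        rw [this]
        ring
    have h1 := congrArg (Polynomial.eval y) hPQ
    rw [hPeval, hQeval] at h1
    rw [h1]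

lemma abel1' : ∀ (k : ℕ), 1 ≤ k → ∀ (y : ℚ),
    ∑ j ∈ range (k + 1),
        (k.choose j : ℚ) * (if j = 0 then 0 else (j:ℚ) ^ (j - 1)) * (y + ((k - j : ℕ) : ℚ)) ^ (k - j)
      = (k : ℚ) * (y + k) ^ (k - 1) := by
  intro k
  induction k with
  | zero => omega
  | succ k IH =>
    intro _ y
    rcases Nat.eq_zero_or_pos k with hk0 | hk1
    · subst hk0
      simp [Finset.sum_range_succ]
    -- k ≥ 1
    set P : Polynomial ℚ := ∑ j ∈ range (k + 2),
      Polynomial.C (((k+1).choose j : ℚ) * (if j = 0 then 0 else (j:ℚ) ^ (j - 1))) *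
        (Polynomial.X + Polynomial.C ((k + 1 - j : ℕ) : ℚ)) ^ (k + 1 - j) with hP
    set Q : Polynomial ℚ := Polynomial.C (((k+1:ℕ)) : ℚ) *
        (Polynomial.X + Polynomial.C (((k+1:ℕ)) : ℚ)) ^ k with hQ
    have hPeval : ∀ z : ℚ, P.eval z = ∑ j ∈ range (k + 2),
        ((k+1).choose j : ℚ) * (if j = 0 then 0 else (j:ℚ) ^ (j - 1)) *
          (z + ((k + 1 - j : ℕ) : ℚ)) ^ (k + 1 - j) := by
      intro z; rw [hP, Polynomial.eval_finset_sum]; simp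
    have hQeval : ∀ z : ℚ, Q.eval z = ((k+1:ℕ) : ℚ) * (z + ((k+1:ℕ):ℚ)) ^ k := by
      intro z; rw [hQ]; simp
    have hPQ : P = Q := by
      apply poly_eq_of_deriv_eq (a := -((k+1:ℕ):ℚ))
      · apply Polynomial.funext
        intro z
        have hdP : (Polynomial.derivative P).eval z
            = ∑ j ∈ range (k + 2), ((k+1).choose j : ℚ) * (if j = 0 then 0 else (j:ℚ) ^ (j - 1)) *
                (((k + 1 - j : ℕ) : ℚ) * (z + ((k + 1 - j : ℕ) : ℚ)) ^ (k + 1 - j - 1)) := by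
          rw [hP, Polynomial.derivative_sum, Polynomial.eval_finset_sum]
          apply Finset.sum_congr rfl
          intro j hj
          rw [Polynomial.derivative_C_mul, Polynomial.derivative_X_add_C_pow]
          simp
        have hdQ : (Polynomial.derivative Q).eval z
            = ((k+1:ℕ) : ℚ) * ((k:ℚ) * (z + ((k+1:ℕ):ℚ)) ^ (k - 1)) := by
          rw [hQ, Polynomial.derivative_C_mul, Polynomial.derivative_X_add_C_pow]
          simp
        rw [hdP, hdQ]
        rw [Finset.sum_range_succ]
        simp only [Nat.sub_self, Nat.cast_zero, zero_mul, mul_zero, add_zero]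
        have hterm : ∀ j ∈ range (k + 1),
            ((k+1).choose j : ℚ) * (if j = 0 then 0 else (j:ℚ) ^ (j - 1)) *
              (((k + 1 - j : ℕ) : ℚ) * (z + ((k + 1 - j : ℕ) : ℚ)) ^ (k + 1 - j - 1))
            = ((k+1:ℕ):ℚ) * ((k.choose j : ℚ) * (if j = 0 then 0 else (j:ℚ) ^ (j - 1)) *
                ((z+1) + ((k - j : ℕ) : ℚ)) ^ (k - j)) := by
          intro j hj
          simp only [Finset.mem_range] at hj
          have hjk : j ≤ k := by omega
          have e1 : ((k + 1 - j : ℕ) : ℚ) * ((k+1).choose j : ℚ) = ((k+1:ℕ):ℚ) * (k.choose j : ℚ) := by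
            rw [← Nat.cast_mul, ← Nat.cast_mul, nat_id k j hjk]
          have e2 : k + 1 - j - 1 = k - j := by omega
          have e3 : ((k + 1 - j : ℕ) : ℚ) = ((k - j : ℕ) : ℚ) + 1 := by
            rw [Nat.cast_sub (by omega), Nat.cast_sub hjk]; push_cast; ring
          rw [e2, e3]
          calc ((k+1).choose j : ℚ) * (if j = 0 then 0 else (j:ℚ) ^ (j - 1)) *
                ((((k - j : ℕ) : ℚ) + 1) * (z + (((k - j : ℕ) : ℚ) + 1)) ^ (k - j))
              = (((k - j : ℕ) : ℚ) + 1) * ((k+1).choose j : ℚ) *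
                ((if j = 0 then 0 else (j:ℚ) ^ (j - 1)) * ((z + 1) + ((k - j : ℕ) : ℚ)) ^ (k - j)) := by ring
            _ = _ := by rw [← e3, e1]; ring
        rw [Finset.sum_congr rfl hterm, ← Finset.mul_sum, IH hk1 (z+1)]
        have : z + 1 + (k:ℚ) = z + ((k+1:ℕ):ℚ) := by push_cast; ring
        rw [this]
      · rw [hPeval, hQeval]
        have hz : -((k+1:ℕ):ℚ) + ((k+1:ℕ):ℚ) = 0 := by ring
        rw [hz, zero_pow (by omega), mul_zero]
        have hterm : ∀ j ∈ range (k + 2),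
            ((k+1).choose j : ℚ) * (if j = 0 then 0 else (j:ℚ) ^ (j - 1)) *
              ((-((k+1:ℕ):ℚ)) + ((k + 1 - j : ℕ) : ℚ)) ^ (k + 1 - j)
            = (-1 : ℚ) ^ (k + 1 - j) * ((k+1).choose j : ℚ) * ((0:ℚ) + j) ^ k := by
          intro j hj
          simp only [Finset.mem_range] at hj
          have hjk : j ≤ k + 1 := by omega
          have e1 : (-((k+1:ℕ):ℚ)) + ((k + 1 - j : ℕ) : ℚ) = -(j:ℚ) := by
            rw [Nat.cast_sub hjk]; push_cast; ring
          rw [e1, neg_pow]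
          rcases Nat.eq_zero_or_pos j with hj0 | hj0
          · subst hj0
            simp [zero_pow (by omega : k ≠ 0)]
          · have hj0' : j ≠ 0 := by omega
            simp only [if_neg hj0']
            have : (j:ℚ) ^ (j - 1) * (j:ℚ) ^ (k + 1 - j) = (j:ℚ) ^ k := by
              rw [← pow_add]; congr 1; omega
            calc ((k+1).choose j : ℚ) * (j:ℚ) ^ (j-1) * ((-1:ℚ) ^ (k+1-j) * (j:ℚ) ^ (k+1-j))
                = (-1 : ℚ) ^ (k + 1 - j) * ((k+1).choose j : ℚ) * ((j:ℚ) ^ (j-1) * (j:ℚ) ^ (k+1-j)) := by ring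
              _ = _ := by rw [this]; ring_nf
        rw [Finset.sum_congr rfl hterm]
        have h0 : ∀ j ∈ range (k + 2),
            (-1 : ℚ) ^ (k + 1 - j) * ((k+1).choose j : ℚ) * ((0:ℚ) + j) ^ k
            = (-1 : ℚ) ^ (k + 1 - j) * ((k+1).choose j : ℚ) * ((0:ℚ) + j) ^ (k + 1 - 1) := by
          intro j _; norm_num
        rw [Finset.sum_congr rfl h0]
        exact asi (k+1) (k+1-1) (by omega) 0
    have h1 := congrArg (Polynomial.eval y) hPQ
    rw [hPeval, hQeval] at h1
    rw [h1]
    norm_num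

lemma gq_eq (m : ℕ) (y : ℚ) :
    gq m y = (y + m) ^ m - (m : ℚ) * (y + m) ^ (m - 1) := by
  rcases Nat.eq_zero_or_pos m with h | h
  · subst h; simp [gq]
  · have hm : m ≠ 0 := by omega
    rw [gq, if_neg hm]
    have h2 : (y + (m:ℚ)) ^ m = (y + (m:ℚ)) ^ (m - 1) * (y + (m:ℚ)) := by
      rw [← pow_succ, Nat.sub_add_cancel h]
    rw [h2]
    ring

lemma abel2 (k : ℕ) (x y : ℚ) :
    ∑ j ∈ range (k + 1), (k.choose j : ℚ) * gq j x * gq (k - j) y = gq k (x + y) := by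
  rcases Nat.eq_zero_or_pos k with hk | hk
  · subst hk; simp [gq]
  obtain ⟨k', rfl⟩ : ∃ k', k = k' + 1 := ⟨k - 1, by omega⟩
  have hsplit : ∀ j ∈ range (k' + 1 + 1),
      (Nat.choose (k'+1) j : ℚ) * gq j x * gq (k' + 1 - j) y
      = (Nat.choose (k'+1) j : ℚ) * gq j x * (y + ((k' + 1 - j : ℕ):ℚ)) ^ (k' + 1 - j)
        - (Nat.choose (k'+1) j : ℚ) * gq j x *
            (((k' + 1 - j : ℕ):ℚ) * (y + ((k' + 1 - j : ℕ):ℚ)) ^ (k' + 1 - j - 1)) := by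
    intro j _
    rw [gq_eq (k' + 1 - j) y]
    ring
  rw [Finset.sum_congr rfl hsplit, Finset.sum_sub_distrib, abel1 (k'+1) x y]
  have hS2 : ∑ j ∈ range (k' + 1 + 1), (Nat.choose (k'+1) j : ℚ) * gq j x *
      (((k' + 1 - j : ℕ):ℚ) * (y + ((k' + 1 - j : ℕ):ℚ)) ^ (k' + 1 - j - 1))
      = ((k'+1:ℕ):ℚ) * (x + y + ((k'+1:ℕ):ℚ)) ^ k' := by
    rw [Finset.sum_range_succ]
    simp only [Nat.sub_self, Nat.cast_zero, zero_mul, mul_zero, add_zero]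
    have hterm : ∀ j ∈ range (k' + 1),
        (Nat.choose (k'+1) j : ℚ) * gq j x *
          (((k' + 1 - j : ℕ):ℚ) * (y + ((k' + 1 - j : ℕ):ℚ)) ^ (k' + 1 - j - 1))
        = ((k'+1:ℕ):ℚ) * ((k'.choose j : ℚ) * gq j x *
            ((y+1) + ((k' - j : ℕ):ℚ)) ^ (k' - j)) := by
      intro j hj
      simp only [Finset.mem_range] at hj
      have hjk : j ≤ k' := by omega
      have e1 : ((k' + 1 - j : ℕ) : ℚ) * ((k'+1).choose j : ℚ) = ((k'+1:ℕ):ℚ) * (k'.choose j : ℚ) := by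
        rw [← Nat.cast_mul, ← Nat.cast_mul, nat_id k' j hjk]
      have e2 : k' + 1 - j - 1 = k' - j := by omega
      have e3 : ((k' + 1 - j : ℕ) : ℚ) = ((k' - j : ℕ) : ℚ) + 1 := by
        rw [Nat.cast_sub (by omega), Nat.cast_sub hjk]; push_cast; ring
      rw [e2, e3]
      calc ((k'+1).choose j : ℚ) * gq j x * (((((k' - j:ℕ):ℚ)) + 1) * (y + ((((k' - j:ℕ):ℚ)) + 1)) ^ (k' - j))
          = ((((k' - j:ℕ):ℚ)) + 1) * ((k'+1).choose j : ℚ) * (gq j x * ((y + 1) + ((k' - j:ℕ):ℚ)) ^ (k' - j)) := by ring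
        _ = _ := by rw [← e3, e1]; ring
    rw [Finset.sum_congr rfl hterm, ← Finset.mul_sum, abel1 k' x (y+1)]
    have : x + (y + 1) + (k':ℚ) = x + y + ((k'+1:ℕ):ℚ) := by push_cast; ring
    rw [this]
  rw [hS2, gq_eq (k'+1) (x+y)]
  have e4 : (x + y + ((k'+1:ℕ):ℚ)) ^ (k'+1) = (x + y + ((k'+1:ℕ):ℚ)) * (x + y + ((k'+1:ℕ):ℚ)) ^ k' := by
    rw [pow_succ]; ring
  have e5 : k' + 1 - 1 = k' := by omega
  rw [e5, e4]

/-- The tree function `W(q) = ∑_{n≥1} n^{n-1} q^n / n!`. -/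
noncomputable def treeW (K : Type*) [Field K] : PowerSeries K :=
  PowerSeries.mk fun n => if n = 0 then 0 else (n : K) ^ (n - 1) / (n.factorial : K)

/-- Formal exponential of a power series with zero constant term. -/
noncomputable def pexp {K : Type*} [Field K] (f : PowerSeries K) : PowerSeries K :=
  PowerSeries.mk fun n => ∑ k ∈ Finset.range (n + 1), PowerSeries.coeff (R := K) n (f ^ k) / (k.factorial : K)

/-- Binomial coefficient with the paper's convention: `1` if `α = β`, `0` if `α < β`
or (`α > β` and `β < 0`), and the usual binomial coefficient when `α ≥ β ≥ 0`. -/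
def bino (α β : ℤ) : ℚ :=
  if α = β then 1 else if α < β ∨ β < 0 then 0 else (α.toNat.choose β.toNat : ℚ)

noncomputable def Tg (x : ℚ) : PowerSeries ℚ := PowerSeries.mk fun k => gq k x / (k.factorial : ℚ)

lemma coeff_Tg (k : ℕ) (x : ℚ) : coeff k (Tg x) = gq k x / (k.factorial : ℚ) := coeff_mk k _

lemma factorial_decomp (k j : ℕ) (hj : j ≤ k) (a b : ℚ) :
    a / (j.factorial : ℚ) * (b / ((k - j).factorial : ℚ))
      = (k.choose j : ℚ) * a * b / (k.factorial : ℚ) := by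
  rw [Nat.cast_choose ℚ hj]
  have h1 : (j.factorial : ℚ) ≠ 0 := by positivity
  have h2 : (((k - j).factorial : ℚ)) ≠ 0 := by positivity
  have h3 : ((k.factorial : ℚ)) ≠ 0 := by positivity
  field_simp

lemma Tg_mul (x y : ℚ) : Tg x * Tg y = Tg (x + y) := by
  ext k
  rw [coeff_mul, Finset.Nat.sum_antidiagonal_eq_sum_range_succ_mk]
  simp only [coeff_Tg]
  have : ∀ j ∈ range (k + 1),
      gq j x / (j.factorial : ℚ) * (gq (k - j) y / ((k - j).factorial : ℚ))
      = (k.choose j : ℚ) * gq j x * gq (k - j) y / (k.factorial : ℚ) := by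
    intro j hj
    simp only [Finset.mem_range] at hj
    exact factorial_decomp k j (by omega) _ _
  rw [Finset.sum_congr rfl this, ← Finset.sum_div, abel2]

lemma Tg_zero : Tg 0 = 1 := by
  ext k
  rw [coeff_Tg, coeff_one]
  rcases Nat.eq_zero_or_pos k with hk | hk
  · subst hk; simp [gq]
  · rw [if_neg (by omega), gq, if_neg (by omega)]
    simp

lemma treeW_eq : treeW ℚ = X * Tg 1 := by
  ext k
  cases k with
  | zero =>
    rw [treeW, coeff_mk, if_pos rfl]
    have : (X : ℚ⟦X⟧) * Tg 1 = X ^ 1 * Tg 1 := by rw [pow_one]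
    rw [this, coeff_X_pow_mul' (Tg 1) 1 0, if_neg (by omega)]
  | succ k =>
    rw [treeW, coeff_mk, if_neg (by omega), coeff_succ_X_mul, coeff_Tg]
    rcases Nat.eq_zero_or_pos k with hk | hk
    · subst hk; simp [gq]
    · rw [gq, if_neg (by omega)]
      have e1 : ((1:ℚ) + k) = ((k+1:ℕ):ℚ) := by push_cast; ring
      have e2 : ((k+1).factorial : ℚ) = ((k+1:ℕ):ℚ) * (k.factorial : ℚ) := by
        rw [Nat.factorial_succ]; push_cast; ring
      have e3 : ((k+1:ℕ):ℚ) ^ (k + 1 - 1) = ((k+1:ℕ):ℚ) * ((k+1:ℕ):ℚ) ^ (k - 1) := by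
        have : k + 1 - 1 = (k - 1) + 1 := by omega
        rw [this, pow_succ]
        ring
      rw [e1, e2, e3]
      have h1 : ((k+1:ℕ):ℚ) ≠ 0 := by positivity
      have h2 : (k.factorial : ℚ) ≠ 0 := by positivity
      field_simp
lemma treeW_pow (j : ℕ) : (treeW ℚ) ^ j = X ^ j * Tg (j : ℚ) := by
  induction j with
  | zero => simp [Tg_zero]
  | succ j IH =>
    rw [pow_succ, IH, treeW_eq]
    have : Tg ((j:ℚ)) * Tg 1 = Tg ((j+1 : ℕ) : ℚ) := by
      rw [Tg_mul]; congr 1; push_cast; ring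
    calc X ^ j * Tg (j:ℚ) * (X * Tg 1) = X ^ (j+1) * (Tg (j:ℚ) * Tg 1) := by ring
      _ = X ^ (j+1) * Tg ((j+1:ℕ):ℚ) := by rw [this]
lemma coeff_treeW_pow (n j : ℕ) :
    coeff n ((treeW ℚ) ^ j) = if j ≤ n then gq (n - j) (j : ℚ) / ((n - j).factorial : ℚ) else 0 := by
  rw [treeW_pow, coeff_X_pow_mul', coeff_Tg]

lemma i3 (n : ℕ) (x : ℚ) :
    ∑ k ∈ range (n + 1), (n.choose k : ℚ) * x ^ k * gq (n - k) ((k : ℚ)) = gq n x := by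
  rcases Nat.eq_zero_or_pos n with hn | hn
  · subst hn; simp [gq]
  rw [Finset.sum_range_succ']
  have h0 : (n.choose 0 : ℚ) * x ^ 0 * gq (n - 0) ((0:ℕ):ℚ) = 0 := by
    rw [gq, if_neg (by omega)]
    simp
  rw [h0, add_zero]
  rw [gq, if_neg (by omega), add_pow]
  rw [Finset.mul_sum]
  have hn1 : n - 1 + 1 = n := by omega
  apply Finset.sum_congr
  · rw [hn1]
  intro t ht
  simp only [Finset.mem_range] at ht
  -- ht : t < n  (after rewriting range (n-1+1) = range n)
  have htn : t ≤ n - 1 := by omega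
  rcases Nat.eq_or_lt_of_le (show t + 1 ≤ n by omega) with he | hlt
  · -- t + 1 = n
    have hgq : gq (n - (t+1)) (((t+1):ℕ):ℚ) = 1 := by
      rw [show n - (t+1) = 0 by omega, gq, if_pos rfl]
    rw [hgq]
    rw [show n.choose (t+1) = 1 by rw [← he]; exact Nat.choose_self _]
    rw [show (n-1).choose t = 1 by rw [show n - 1 = t by omega]; exact Nat.choose_self _]
    rw [show n - 1 - t = 0 by omega]
    push_cast
    ring
  · -- t + 1 < n
    have hgq : gq (n - (t+1)) (((t+1):ℕ):ℚ)
        = (((t+1):ℕ):ℚ) * (n:ℚ) ^ (n - t - 2) := by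
      rw [gq, if_neg (by omega)]
      have e1 : (((t+1):ℕ):ℚ) + ((n - (t+1) : ℕ):ℚ) = (n:ℚ) := by
        rw [Nat.cast_sub (by omega)]; push_cast; ring
      rw [e1, show n - (t+1) - 1 = n - t - 2 by omega]
    rw [hgq]
    have hc : ((n.choose (t+1) : ℚ)) * (((t+1):ℕ):ℚ) = (n:ℚ) * ((n-1).choose t : ℚ) := by
      have h := Nat.add_one_mul_choose_eq (n-1) t
      rw [hn1] at h
      exact_mod_cast h.symm
    have e2 : (n:ℚ) ^ (n - 1 - t) = (n:ℚ) * (n:ℚ) ^ (n - t - 2) := by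
      rw [show n - 1 - t = (n - t - 2) + 1 by omega, pow_succ]
      ring
    calc (n.choose (t+1) : ℚ) * x ^ (t+1) * ((((t+1):ℕ):ℚ) * (n:ℚ) ^ (n - t - 2))
        = ((n.choose (t+1) : ℚ) * (((t+1):ℕ):ℚ)) * x ^ (t+1) * (n:ℚ) ^ (n - t - 2) := by ring
      _ = (n:ℚ) * ((n-1).choose t : ℚ) * x ^ (t+1) * (n:ℚ) ^ (n - t - 2) := by rw [hc]
      _ = x * (x ^ t * (n:ℚ) ^ (n - 1 - t) * ((n-1).choose t : ℚ)) := by rw [e2]; ring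

lemma pexp_eq (x : ℚ) : pexp ((x : ℚ) • treeW ℚ) = Tg x := by
  ext n
  rw [pexp, coeff_mk, coeff_Tg]
  have hterm : ∀ k ∈ range (n + 1),
      coeff n (((x : ℚ) • treeW ℚ) ^ k) / (k.factorial : ℚ)
      = (n.choose k : ℚ) * x ^ k * gq (n - k) ((k:ℚ)) / (n.factorial : ℚ) := by
    intro k hk
    simp only [Finset.mem_range] at hk
    have hkn : k ≤ n := by omega
    rw [smul_pow, map_smul, coeff_treeW_pow, if_pos hkn]
    rw [smul_eq_mul]
    rw [Nat.cast_choose ℚ hkn]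
    have h1 : ((k.factorial : ℚ)) ≠ 0 := by positivity
    have h2 : (((n - k).factorial : ℚ)) ≠ 0 := by positivity
    have h3 : ((n.factorial : ℚ)) ≠ 0 := by positivity
    field_simp
  rw [Finset.sum_congr rfl hterm, ← Finset.sum_div, i3]

noncomputable def Vg (x : ℚ) : PowerSeries ℚ :=
  PowerSeries.mk fun k => ((k : ℚ) + x) ^ k / (k.factorial : ℚ)

lemma coeff_Vg (k : ℕ) (x : ℚ) : coeff k (Vg x) = ((k : ℚ) + x) ^ k / (k.factorial : ℚ) :=
  coeff_mk k _

lemma coeff_treeW (n : ℕ) :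
    coeff n (treeW ℚ) = if n = 0 then 0 else (n : ℚ) ^ (n - 1) / (n.factorial : ℚ) :=
  coeff_mk n _

lemma oneSub_mul_Vg (x : ℚ) : (1 - treeW ℚ) * Vg x = Tg x := by
  ext k
  rw [sub_mul, one_mul, map_sub, coeff_Vg, coeff_Tg]
  rcases Nat.eq_zero_or_pos k with hk | hk
  · subst hk
    rw [coeff_mul]
    simp [coeff_treeW, gq]
  have hmul : coeff k (treeW ℚ * Vg x)
      = ∑ j ∈ range (k + 1), (k.choose j : ℚ) * (if j = 0 then 0 else (j:ℚ) ^ (j - 1)) *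
          (x + ((k - j : ℕ):ℚ)) ^ (k - j) / (k.factorial : ℚ) := by
    rw [coeff_mul, Finset.Nat.sum_antidiagonal_eq_sum_range_succ_mk]
    apply Finset.sum_congr rfl
    intro j hj
    simp only [Finset.mem_range] at hj
    rw [coeff_treeW, coeff_Vg]
    rcases Nat.eq_zero_or_pos j with hj0 | hj0
    · subst hj0; simp
    · rw [if_neg (by omega), if_neg (by omega)]
      rw [factorial_decomp k j (by omega)]
      rw [add_comm ((((k-j:ℕ))):ℚ) x]
  rw [hmul, ← Finset.sum_div, abel1' k hk x]
  rw [gq, if_neg (by omega)]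
  have e1 : ((k:ℚ) + x) ^ k = (x + (k:ℚ)) ^ k := by ring_nf
  have e2 : (x + (k:ℚ)) ^ k = (x + (k:ℚ)) * (x + (k:ℚ)) ^ (k - 1) := by
    conv_rhs => rw [← pow_succ']
    congr 1
    omega
  rw [e1, e2]
  ring

lemma constCoeff_oneSub : constantCoeff (1 - treeW ℚ) ≠ 0 := by
  rw [map_sub]
  have : constantCoeff (treeW ℚ) = 0 := by
    rw [← coeff_zero_eq_constantCoeff_apply, coeff_treeW]
    simp
  rw [this]
  simp

lemma inv_oneSub : (1 - treeW ℚ)⁻¹ = Vg 0 := by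
  rw [PowerSeries.inv_eq_iff_mul_eq_one constCoeff_oneSub]
  rw [mul_comm, oneSub_mul_Vg, Tg_zero]

lemma Tg_mul_Vg (x : ℚ) : Tg x * Vg 0 = Vg x := by
  have h1 := oneSub_mul_Vg x
  have h2 : (1 - treeW ℚ) * Vg 0 = 1 := by rw [oneSub_mul_Vg, Tg_zero]
  calc Tg x * Vg 0 = ((1 - treeW ℚ) * Vg x) * Vg 0 := by rw [h1]
    _ = Vg x * ((1 - treeW ℚ) * Vg 0) := by ring
    _ = Vg x := by rw [h2, mul_one]

lemma treeW_pow_mul_Vg (i : ℕ) (x : ℚ) :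
    (treeW ℚ) ^ i * Vg x = X ^ i * Vg (x + i) := by
  rw [treeW_pow, ← Tg_mul_Vg x, ← Tg_mul_Vg (x + i)]
  have : Tg ((i:ℚ)) * Tg x = Tg (x + i) := by rw [Tg_mul]; ring_nf
  calc X ^ i * Tg (i:ℚ) * (Tg x * Vg 0) = X ^ i * (Tg (i:ℚ) * Tg x) * Vg 0 := by ring
    _ = X ^ i * Tg (x + i) * Vg 0 := by rw [this]
    _ = _ := by ring

lemma bino_neg_one (i : ℕ) : bino ((i:ℤ) - 1) (-1) = if i = 0 then 1 else 0 := by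
  rcases Nat.eq_zero_or_pos i with h | h
  · subst h; rw [bino, if_pos (by norm_num)]; simp
  · rw [bino, if_neg (by omega), if_pos (Or.inr (by omega)), if_neg (by omega)]

lemma bino_nat (d i : ℕ) : bino ((d:ℤ) + i) (d:ℤ) = ((d + i).choose d : ℚ) := by
  rcases Nat.eq_zero_or_pos i with h | h
  · subst h; rw [bino, if_pos (by omega)]; simp
  · rw [bino, if_neg (by omega), if_neg (by push_neg; omega)]
    have h1 : ((d:ℤ) + (i:ℤ)).toNat = d + i := by omega
    have h2 : ((d:ℤ)).toNat = d := by omega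
    rw [h1, h2]

lemma constCoeff_treeW : constantCoeff (treeW ℚ) = 0 := by
  rw [← coeff_zero_eq_constantCoeff_apply, coeff_treeW]
  simp

lemma coeff_treeW_pow_mul (i a : ℕ) (s : PowerSeries ℚ) (h : a < i) :
    coeff a ((treeW ℚ) ^ i * s) = 0 := by
  have hdvd : (X : ℚ⟦X⟧) ^ i ∣ (treeW ℚ) ^ i * s :=
    dvd_mul_of_dvd_left (pow_dvd_pow_of_dvd (X_dvd_iff.mpr constCoeff_treeW) i) s
  exact (X_pow_dvd_iff.mp hdvd) a h

lemma i6 (m j : ℕ) : coeff j ((Vg 0) ^ m)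
    = ∑ i ∈ range (j + 1), bino ((m:ℤ) - 1 + i) ((m:ℤ) - 1) * coeff j ((treeW ℚ) ^ i) := by
  cases m with
  | zero =>
    rw [pow_zero]
    rw [Finset.sum_eq_single 0]
    · have h00 : bino (-1 : ℤ) (-1) = 1 := by rw [bino, if_pos rfl]
      norm_num [h00]
    · intro i _ hi
      have : ((0:ℕ):ℤ) - 1 + (i:ℤ) = (i:ℤ) - 1 := by omega
      rw [this, show ((0:ℕ):ℤ) - 1 = -1 by omega, bino_neg_one, if_neg hi]
      ring
    · intro h; exact absurd (Finset.mem_range.mpr (by omega)) h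
  | succ d =>
    -- polynomial truncation of the negative binomial series
    set P : Polynomial ℚ := ∑ i ∈ range (j + 1),
      Polynomial.C (((d + i).choose d : ℚ)) * Polynomial.X ^ i with hPdef
    have hPco : ∀ b ≤ j, P.coeff b = ((d + b).choose d : ℚ) := by
      intro b hb
      rw [hPdef, Polynomial.finset_sum_coeff]
      rw [Finset.sum_eq_single b]
      · rw [Polynomial.coeff_C_mul, Polynomial.coeff_X_pow, if_pos rfl, mul_one]
      · intro i _ hi
        rw [Polynomial.coeff_C_mul, Polynomial.coeff_X_pow, if_neg (fun hh => hi hh.symm), mul_zero]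
      · intro h; exact absurd (Finset.mem_range.mpr (by omega)) h
    have hdvd : (Polynomial.X ^ (j + 1) : Polynomial ℚ) ∣
        ((1 - Polynomial.X) ^ (d + 1) * P - 1) := by
      rw [Polynomial.X_pow_dvd_iff]
      intro l hl
      have hl' : l ≤ j := by omega
      have hcast : (((1 - Polynomial.X) ^ (d + 1) * P - 1 : Polynomial ℚ).coeff l)
          = coeff l (((1 - X) ^ (d+1) : ℚ⟦X⟧) * (P : ℚ⟦X⟧) - 1) := by
        rw [← Polynomial.coeff_coe]
        congr 1
        push_cast [Polynomial.coe_sub, Polynomial.coe_mul, Polynomial.coe_pow,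
          Polynomial.coe_one, Polynomial.coe_X]
        ring
      rw [hcast, map_sub]
      have hmk : coeff l (((1 - X) ^ (d+1) : ℚ⟦X⟧) * (P : ℚ⟦X⟧))
          = coeff l (((1 - X) ^ (d+1) : ℚ⟦X⟧) * (mk fun b => ((d + b).choose d : ℚ))) := by
        rw [coeff_mul, coeff_mul]
        apply Finset.sum_congr rfl
        intro p hp
        have hp2 : p.2 ≤ l := by
          have hp' := Finset.HasAntidiagonal.mem_antidiagonal.mp hp
          omega
        rw [Polynomial.coeff_coe, hPco p.2 (by omega), coeff_mk]
      rw [hmk]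
      have hone := mk_add_choose_mul_one_sub_pow_eq_one ℚ d
      rw [mul_comm] at hone
      rw [hone]
      simp
    obtain ⟨g, hg⟩ := hdvd
    have haev := congrArg (Polynomial.aeval (treeW ℚ)) hg
    simp only [map_sub, map_mul, map_pow, map_one, Polynomial.aeval_X] at haev
    have hunit : (1 - treeW ℚ) ^ (d+1) * (Vg 0) ^ (d+1) = 1 := by
      rw [← mul_pow, oneSub_mul_Vg, Tg_zero, one_pow]
    have h3 : (1 - treeW ℚ) ^ (d+1) * Polynomial.aeval (treeW ℚ) P
        = 1 + (treeW ℚ) ^ (j+1) * Polynomial.aeval (treeW ℚ) g := by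
      linear_combination haev
    have hA : Polynomial.aeval (treeW ℚ) P
        = (Vg 0) ^ (d+1) + (treeW ℚ) ^ (j+1) * (Polynomial.aeval (treeW ℚ) g * (Vg 0) ^ (d+1)) := by
      calc Polynomial.aeval (treeW ℚ) P
          = (Polynomial.aeval (treeW ℚ) P) * ((1 - treeW ℚ) ^ (d+1) * (Vg 0) ^ (d+1)) := by
            rw [hunit, mul_one]
        _ = ((1 - treeW ℚ) ^ (d+1) * Polynomial.aeval (treeW ℚ) P) * (Vg 0) ^ (d+1) := by ring
        _ = (1 + (treeW ℚ) ^ (j+1) * Polynomial.aeval (treeW ℚ) g) * (Vg 0) ^ (d+1) := by rw [h3]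
        _ = _ := by ring
    have hcoeffA : coeff j (Polynomial.aeval (treeW ℚ) P)
        = ∑ i ∈ range (j+1), ((d+i).choose d : ℚ) * coeff j ((treeW ℚ) ^ i) := by
      rw [hPdef, map_sum, map_sum]
      apply Finset.sum_congr rfl
      intro i _
      rw [map_mul, Polynomial.aeval_C, map_pow, Polynomial.aeval_X]
      have : (algebraMap ℚ ℚ⟦X⟧) (((d+i).choose d : ℚ)) = C (((d+i).choose d : ℚ)) := by
        simp [PowerSeries.algebraMap_apply]
      rw [this, coeff_C_mul]
    have hfinal : coeff j (Polynomial.aeval (treeW ℚ) P) = coeff j ((Vg 0) ^ (d+1)) := by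
      rw [hA, map_add, coeff_treeW_pow_mul (j+1) j _ (by omega), add_zero]
    have hbino : ∀ i ∈ range (j+1),
        bino (((d+1:ℕ):ℤ) - 1 + (i:ℤ)) (((d+1:ℕ):ℤ) - 1) * coeff j ((treeW ℚ) ^ i)
        = ((d+i).choose d : ℚ) * coeff j ((treeW ℚ) ^ i) := by
      intro i _
      have e : (((d+1:ℕ):ℤ) - 1 + (i:ℤ)) = (d:ℤ) + (i:ℤ) := by push_cast; ring
      have e2 : (((d+1:ℕ):ℤ) - 1) = (d:ℤ) := by push_cast; ring
      rw [e, e2, bino_nat]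
    rw [Finset.sum_congr rfl hbino, ← hcoeffA, hfinal]

theorem stmt6 (n : ℕ) (hn : 1 ≤ n) (x : ℤ) :
    pexp ((x : ℚ) • treeW ℚ) * ((1 - treeW ℚ)⁻¹) ^ n
      = PowerSeries.mk fun k => ∑ m ∈ Finset.range (k + 1),
          bino ((k : ℤ) - (m : ℤ) + (n : ℤ) - 2) ((n : ℤ) - 2)
            * ((k : ℚ) + (x : ℚ)) ^ m / (m.factorial : ℚ) := by
  obtain ⟨m, rfl⟩ : ∃ m, n = m + 1 := ⟨n - 1, by omega⟩
  rw [pexp_eq, inv_oneSub]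
  have hkey : Tg ((x:ℤ):ℚ) * (Vg 0) ^ (m + 1) = Vg ((x:ℤ):ℚ) * (Vg 0) ^ m := by
    rw [pow_succ', ← mul_assoc, Tg_mul_Vg]
  rw [hkey]
  ext k
  rw [coeff_mk, coeff_mul, Finset.Nat.sum_antidiagonal_eq_sum_range_succ_mk]
  have hstep1 : ∀ a ∈ range (k+1),
      coeff a (Vg ((x:ℤ):ℚ)) * coeff (k - a) ((Vg 0)^m)
      = ∑ i ∈ range (k+1), bino ((m:ℤ) - 1 + i) ((m:ℤ) - 1) *
          (coeff a (Vg ((x:ℤ):ℚ)) * coeff (k - a) ((treeW ℚ)^i)) := by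
    intro a ha
    simp only [Finset.mem_range] at ha
    rw [i6 m (k - a), Finset.mul_sum]
    rw [Finset.sum_subset (Finset.range_subset_range.mpr (show k - a + 1 ≤ k + 1 by omega))]
    · apply Finset.sum_congr rfl
      intro i _
      ring
    · intro i hi hni
      simp only [Finset.mem_range] at hi hni
      rw [coeff_treeW_pow, if_neg (by omega)]
      simp
  rw [Finset.sum_congr rfl hstep1]
  rw [Finset.sum_comm]
  have hstep2 : ∀ i ∈ range (k+1),
      (∑ a ∈ range (k+1), bino ((m:ℤ) - 1 + i) ((m:ℤ) - 1) *
          (coeff a (Vg ((x:ℤ):ℚ)) * coeff (k - a) ((treeW ℚ)^i)))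
      = bino ((m:ℤ) - 1 + i) ((m:ℤ) - 1) *
          (((k:ℚ) + ((x:ℤ):ℚ)) ^ (k - i) / (((k-i).factorial : ℕ) : ℚ)) := by
    intro i hi
    simp only [Finset.mem_range] at hi
    rw [← Finset.mul_sum]
    congr 1
    have hc : ∑ a ∈ range (k+1), coeff a (Vg ((x:ℤ):ℚ)) * coeff (k-a) ((treeW ℚ)^i)
        = coeff k (Vg ((x:ℤ):ℚ) * (treeW ℚ)^i) := by
      rw [coeff_mul, Finset.Nat.sum_antidiagonal_eq_sum_range_succ_mk]
    rw [hc, mul_comm (Vg _) _, treeW_pow_mul_Vg, coeff_X_pow_mul', if_pos (by omega : i ≤ k)]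
    rw [coeff_Vg]
    congr 2
    rw [Nat.cast_sub (by omega : i ≤ k)]
    push_cast
    ring
  rw [Finset.sum_congr rfl hstep2]
  rw [← Finset.sum_range_reflect]
  apply Finset.sum_congr rfl
  intro i hi
  simp only [Finset.mem_range] at hi
  have e0 : k + 1 - 1 - i = k - i := by omega
  rw [e0]
  have e3 : k - (k - i) = i := by omega
  have e2 : ((m+1:ℕ):ℤ) - 2 = (m:ℤ) - 1 := by push_cast; ring
  rw [e3, e2]
  have e1 : (k:ℤ) - (i:ℤ) + ((m+1:ℕ):ℤ) - 2 = (m:ℤ) - 1 + ((k - i : ℕ):ℤ) := by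
    push_cast [Nat.cast_sub (by omega : i ≤ k)]
    ring
  rw [e1]
  ring
end

section
/- As formal power series, the series \sum_{n\geq 1} (n^{n+1}/n!) (x + n)^{k} q^n equals (q d/dq + x)^{k} applied to (q d/dq)(1/(1-W(q))), for every nonnegative integer k and real x, where W is the tree function; moreover q d/dq = (W/(1-W)) d/dW under the substitution q = W e^{-W}. -/
section AuxPoly
open Finset Polynomial

lemma taylor_leadingCoeff (r : ℝ) (p : Polynomial ℝ) :
    (taylor r p).coeff p.natDegree = p.coeff p.natDegree := by
  rw [taylor_coeff]
  have : hasseDeriv p.natDegree p = C (p.coeff p.natDegree) := by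
    ext m
    rw [hasseDeriv_coeff]
    rcases Nat.eq_zero_or_pos m with h | h
    · simp [h]
    · rw [coeff_C, if_neg (by omega)]
      rw [Polynomial.coeff_eq_zero_of_natDegree_lt (by omega)]
      ring
  rw [this, eval_C]

lemma alt_sum (n : ℕ) (p : Polynomial ℝ) (hp : p.degree < n) :
    ∑ j ∈ range (n+1), (-1:ℝ)^j * (n.choose j : ℝ) * p.eval (j:ℝ) = 0 := by
  induction n generalizing p with
  | zero =>
    have hp0 : p = 0 := by
      rw [← Polynomial.degree_eq_bot, ← Nat.WithBot.lt_zero_iff]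
      exact_mod_cast hp
    simp [hp0]
  | succ n ih =>
    set q : Polynomial ℝ := taylor 1 p - p with hq
    have hdq : q.degree < n := by
      rcases eq_or_ne p 0 with h0 | h0
      · simp only [hq, h0, map_zero, sub_self, degree_zero]
        exact_mod_cast WithBot.bot_lt_coe n
      rcases Nat.eq_zero_or_pos p.natDegree with hd0 | hdpos
      · obtain ⟨a, rfl⟩ : ∃ a, p = C a := ⟨p.coeff 0, Polynomial.eq_C_of_natDegree_eq_zero hd0⟩
        simp only [hq, taylor_C, sub_self, degree_zero]
        exact_mod_cast WithBot.bot_lt_coe n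
      · have ht0 : taylor 1 p ≠ 0 := fun h => h0 (taylor_injective 1 (by simpa using h))
        have hdeg : (taylor 1 p).degree = p.degree := by
          rw [degree_eq_natDegree ht0, degree_eq_natDegree h0, natDegree_taylor]
        have hlt : q.degree < p.degree := by
          have := degree_sub_lt hdeg ht0
            (by rw [leadingCoeff, leadingCoeff, natDegree_taylor, taylor_leadingCoeff])
          rwa [hdeg] at this
        have hple : p.degree ≤ n := by
          rw [degree_eq_natDegree h0] at hp ⊢
          exact_mod_cast Nat.lt_succ_iff.mp (by exact_mod_cast hp)
        exact lt_of_lt_of_le hlt hple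
    have key : ∑ j ∈ range (n+2), (-1:ℝ)^j * ((n+1).choose j : ℝ) * p.eval (j:ℝ)
        = - ∑ j ∈ range (n+1), (-1:ℝ)^j * (n.choose j : ℝ) * q.eval (j:ℝ) := by
      have e1 : ∑ j ∈ range (n+2), (-1:ℝ)^j * ((n+1).choose j : ℝ) * p.eval (j:ℝ)
          = (∑ i ∈ range (n+1), (-1:ℝ)^(i+1) * ((n+1).choose (i+1) : ℝ) * p.eval ((i+1:ℕ):ℝ))
            + p.eval 0 := by
        rw [Finset.sum_range_succ' (fun j => (-1:ℝ)^j * ((n+1).choose j : ℝ) * p.eval (j:ℝ)) (n+1)]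
        simp
      have e2 : ∑ j ∈ range (n+2), (-1:ℝ)^j * (n.choose j : ℝ) * p.eval (j:ℝ)
          = (∑ i ∈ range (n+1), (-1:ℝ)^(i+1) * (n.choose (i+1) : ℝ) * p.eval ((i+1:ℕ):ℝ))
            + p.eval 0 := by
        rw [Finset.sum_range_succ' (fun j => (-1:ℝ)^j * (n.choose j : ℝ) * p.eval (j:ℝ)) (n+1)]
        simp
      have e3 : ∑ j ∈ range (n+2), (-1:ℝ)^j * (n.choose j : ℝ) * p.eval (j:ℝ)
          = ∑ j ∈ range (n+1), (-1:ℝ)^j * (n.choose j : ℝ) * p.eval (j:ℝ) := by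
        rw [Finset.sum_range_succ]
        simp [Nat.choose_succ_self]
      have e4 : ∀ i ∈ range (n+1), (-1:ℝ)^(i+1) * ((n+1).choose (i+1) : ℝ) * p.eval ((i+1:ℕ):ℝ)
          = (-1:ℝ)^(i+1) * (n.choose i : ℝ) * p.eval ((i+1:ℕ):ℝ)
            + (-1:ℝ)^(i+1) * (n.choose (i+1) : ℝ) * p.eval ((i+1:ℕ):ℝ) := by
        intro i _
        rw [Nat.choose_succ_succ]
        push_cast
        ring
      rw [e1, Finset.sum_congr rfl e4, Finset.sum_add_distrib]
      have e5 : ∑ i ∈ range (n+1), (-1:ℝ)^(i+1) * (n.choose (i+1) : ℝ) * p.eval ((i+1:ℕ):ℝ)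
          = (∑ j ∈ range (n+1), (-1:ℝ)^j * (n.choose j : ℝ) * p.eval (j:ℝ)) - p.eval 0 := by
        rw [← e3, e2]; ring
      rw [e5]
      have e6 : ∀ i ∈ range (n+1), (-1:ℝ)^(i+1) * (n.choose i : ℝ) * p.eval ((i+1:ℕ):ℝ)
          = -((-1:ℝ)^i * (n.choose i : ℝ) * (taylor (1:ℝ) p).eval (i:ℝ)) := by
        intro i _
        rw [taylor_eval]
        push_cast
        ring_nf
      rw [Finset.sum_congr rfl e6, Finset.sum_neg_distrib]
      have e7 : ∑ j ∈ range (n+1), (-1:ℝ)^j * (n.choose j : ℝ) * q.eval (j:ℝ)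
          = (∑ j ∈ range (n+1), (-1:ℝ)^j * (n.choose j : ℝ) * (taylor (1:ℝ) p).eval (j:ℝ))
            - ∑ j ∈ range (n+1), (-1:ℝ)^j * (n.choose j : ℝ) * p.eval (j:ℝ) := by
        rw [← Finset.sum_sub_distrib]
        apply Finset.sum_congr rfl
        intro j _
        simp [hq, eval_sub]
        ring
      rw [e7]
      ring
    rw [show n+1+1 = n+2 from rfl, key, ih q hdq, neg_zero]

lemma poly_eq_of_deriv_eval {p q : Polynomial ℝ} (h : derivative p = derivative q)
    (a : ℝ) (h2 : p.eval a = q.eval a) : p = q := by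
  have hd : derivative (p - q) = 0 := by rw [derivative_sub, h, sub_self]
  have hc := Polynomial.eq_C_of_derivative_eq_zero hd
  have : (p - q).eval a = 0 := by rw [eval_sub, h2, sub_self]
  rw [hc, eval_C] at this
  have h0 : p - q = 0 := by rw [hc, this, map_zero]
  exact sub_eq_zero.mp h0


lemma alt_sum' (m : ℕ) (hm : 2 ≤ m) :
    ∑ j ∈ Icc 1 m, (-1:ℝ)^j * (m.choose j : ℝ) * (j:ℝ)^(m-1) = 0 := by
  have h := alt_sum m (X^(m-1)) (by
    rw [degree_X_pow]
    exact_mod_cast Nat.sub_lt (by omega) one_pos)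
  rw [Finset.sum_range_succ'] at h
  simp only [eval_pow, eval_X, Nat.cast_zero, pow_zero, one_mul, Nat.choose_zero_right,
    Nat.cast_one, zero_pow (show m - 1 ≠ 0 by omega), mul_zero, add_zero] at h
  rw [← Finset.Ico_add_one_right_eq_Icc, Finset.sum_Ico_eq_sum_range]
  simpa [add_comm] using h

lemma choose_id (n j : ℕ) : (n + 1 - j) * ((n+1).choose j) = (n+1) * n.choose j := by
  rw [Nat.add_one_mul_choose_eq, Nat.choose_succ_right_eq]
  ring

lemma smul_C_mul (a e : ℝ) (P : Polynomial ℝ) : a • (C e * P) = (e * a) • P := by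
  rw [Polynomial.smul_eq_C_mul, Polynomial.smul_eq_C_mul, ← mul_assoc, ← map_mul, mul_comm a e]

lemma Hpoly : ∀ n : ℕ, 1 ≤ n → ∀ c : ℝ,
    (∑ j ∈ Icc 1 n, (((n.choose j : ℕ) : ℝ) * (j:ℝ)^(j-1)) • (X + C (c + ((n - j : ℕ):ℝ)))^(n-j))
      = (n:ℝ) • (X + C (c + n))^(n-1) := by
  intro n
  induction n with
  | zero => intro h; omega
  | succ n ih =>
    intro _ c
    rcases Nat.eq_zero_or_pos n with rfl | hn
    · norm_num
    have hn1 : 1 ≤ n := hn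
    apply poly_eq_of_deriv_eval (a := -(c + (n+1 : ℕ)))
    · -- derivative equality
      rw [derivative_sum]
      have hstep : ∀ j ∈ Icc 1 (n+1),
          derivative ((((n+1).choose j : ℝ) * (j:ℝ)^(j-1)) • (X + C (c + (((n+1) - j : ℕ):ℝ)))^((n+1)-j))
          = ((((n+1) - j : ℕ):ℝ) * (((n+1).choose j : ℝ) * (j:ℝ)^(j-1))) •
              (X + C (c + (((n+1) - j : ℕ):ℝ)))^((n+1)-j-1) := by
        intro j hj
        rw [derivative_smul, derivative_pow, derivative_X_add_C, mul_one]
        exact smul_C_mul _ _ _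
      rw [Finset.sum_congr rfl hstep]
      rw [Finset.sum_Icc_succ_top (by omega)]
      have htop : ((((n+1) - (n+1) : ℕ):ℝ) * (((n+1).choose (n+1) : ℝ) * ((n+1:ℕ):ℝ)^((n+1)-1))) •
          ((X : Polynomial ℝ) + C (c + (((n+1) - (n+1) : ℕ):ℝ)))^((n+1)-(n+1)-1) = 0 := by
        simp
      rw [htop, add_zero]
      have hterm : ∀ j ∈ Icc 1 n,
          ((((n+1) - j : ℕ):ℝ) * (((n+1).choose j : ℝ) * (j:ℝ)^(j-1))) •
              ((X : Polynomial ℝ) + C (c + (((n+1) - j : ℕ):ℝ)))^((n+1)-j-1)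
          = ((n+1:ℝ)) • ((((n.choose j : ℕ):ℝ) * (j:ℝ)^(j-1)) •
              (X + C ((c+1) + ((n - j : ℕ):ℝ)))^(n-j)) := by
        intro j hj
        simp only [mem_Icc] at hj
        have h1 : ((n+1) - j : ℕ) = (n - j) + 1 := by omega
        have h2 : (n+1) - j - 1 = n - j := by omega
        have h3 : c + (((n - j) + 1 : ℕ):ℝ) = (c+1) + ((n - j : ℕ):ℝ) := by push_cast; ring
        rw [h2, h1, h3, smul_smul]
        have h4 : (((n - j) + 1 : ℕ):ℝ) * (((n+1).choose j : ℕ):ℝ) = ((n:ℝ) + 1) * ((n.choose j : ℕ):ℝ) := by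
          have : ((n - j) + 1) * ((n+1).choose j) = (n+1) * (n.choose j) := by
            rw [show (n - j) + 1 = n + 1 - j by omega]
            exact choose_id n j
          exact_mod_cast this
        congr 1
        rw [← mul_assoc, h4, mul_assoc]
      rw [Finset.sum_congr rfl hterm, ← Finset.smul_sum, ih hn1 (c+1)]
      rw [derivative_smul, derivative_pow, derivative_X_add_C, mul_one]
      have hc : (c + 1 + (n:ℝ)) = c + ((n+1:ℕ):ℝ) := by push_cast; ring
      rw [hc, smul_smul, smul_C_mul]
      congr 1
      push_cast [Nat.add_sub_cancel]
      ring
    · -- evaluation at -(c + (n+1))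
      rw [eval_smul, eval_finset_sum]
      have hev : ∀ j ∈ Icc 1 (n+1),
          eval (-(c + ((n+1:ℕ):ℝ))) ((((n+1).choose j : ℝ) * (j:ℝ)^(j-1)) • (X + C (c + (((n+1) - j : ℕ):ℝ)))^((n+1)-j))
          = (-1:ℝ)^(n+1) * ((-1:ℝ)^j * (((n+1).choose j : ℝ)) * (j:ℝ)^((n+1)-1)) := by
        intro j hj
        simp only [mem_Icc] at hj
        rw [eval_smul, eval_pow, eval_add, eval_X, eval_C, smul_eq_mul]
        have hbase : -(c + ((n+1:ℕ):ℝ)) + (c + (((n+1) - j : ℕ):ℝ)) = -(j:ℝ) := by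
          rw [Nat.cast_sub (by omega)]
          push_cast
          ring
        rw [hbase]
        rw [show (-(j:ℝ)) = (-1) * (j:ℝ) by ring, mul_pow]
        have hj1 : (j:ℝ)^(j-1) * (j:ℝ)^((n+1)-j) = (j:ℝ)^((n+1)-1) := by
          rw [← pow_add]
          congr 1
          omega
        have hsgn : (-1:ℝ)^((n+1)-j) = (-1:ℝ)^(n+1) * (-1:ℝ)^j := by
          have : (-1:ℝ)^((n+1)-j) * (-1:ℝ)^j = (-1:ℝ)^(n+1) := by
            rw [← pow_add]
            congr 1
            omega
          have hsq : (-1:ℝ)^j * (-1:ℝ)^j = 1 := by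
            rw [← pow_add, ← two_mul, pow_mul]
            norm_num
          calc (-1:ℝ)^((n+1)-j) = (-1:ℝ)^((n+1)-j) * ((-1:ℝ)^j * (-1:ℝ)^j) := by rw [hsq, mul_one]
            _ = ((-1:ℝ)^((n+1)-j) * (-1:ℝ)^j) * (-1:ℝ)^j := by ring
            _ = (-1:ℝ)^(n+1) * (-1:ℝ)^j := by rw [this]
        calc ((n+1).choose j : ℝ) * (j:ℝ)^(j-1) * ((-1:ℝ)^((n+1)-j) * (j:ℝ)^((n+1)-j))
            = (-1:ℝ)^((n+1)-j) * ((n+1).choose j : ℝ) * ((j:ℝ)^(j-1) * (j:ℝ)^((n+1)-j)) := by ring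
          _ = (-1:ℝ)^(n+1) * ((-1:ℝ)^j * (((n+1).choose j : ℝ)) * (j:ℝ)^((n+1)-1)) := by
              rw [hj1, hsgn]; ring
      rw [Finset.sum_congr rfl hev, ← Finset.mul_sum]
      rw [alt_sum' (n+1) (by omega)]
      rw [eval_pow, eval_add, eval_X, eval_C]
      have : -(c + ((n+1:ℕ):ℝ)) + (c + ((n+1:ℕ):ℝ)) = 0 := by ring
      rw [this, zero_pow (by omega : n + 1 - 1 ≠ 0)]
      simp


lemma key_sum (n : ℕ) (hn : 1 ≤ n) :
    ∑ j ∈ Icc 1 n, ((n.choose j : ℕ):ℝ) * (j:ℝ)^(j-1) * ((n-j:ℕ):ℝ)^(n-j) = (n:ℝ)^n := by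
  have h := congrArg (Polynomial.eval (0:ℝ)) (Hpoly n hn 0)
  rw [eval_finset_sum, eval_smul] at h
  simp only [eval_smul, eval_pow, eval_add, eval_X, eval_C, zero_add, smul_eq_mul] at h
  rw [h, ← pow_succ']
  congr 1
  omega

lemma key_div (n : ℕ) (hn : 1 ≤ n) :
    ∑ j ∈ Icc 1 n, (j:ℝ)^(j-1)/(j.factorial:ℝ) * (((n-j:ℕ):ℝ)^(n-j)/((n-j).factorial:ℝ))
      = (n:ℝ)^n / (n.factorial:ℝ) := by
  rw [eq_div_iff (by exact_mod_cast n.factorial_ne_zero)]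
  rw [← key_sum n hn, Finset.sum_mul]
  apply Finset.sum_congr rfl
  intro j hj
  simp only [mem_Icc] at hj
  have hfac : ((n.choose j : ℕ):ℝ) * (j.factorial:ℝ) * ((n-j).factorial:ℝ) = (n.factorial:ℝ) := by
    exact_mod_cast congrArg (Nat.cast : ℕ → ℝ) (Nat.choose_mul_factorial_mul_factorial hj.2)
  have hj0 : (j.factorial:ℝ) ≠ 0 := by exact_mod_cast j.factorial_ne_zero
  have hnj0 : ((n-j).factorial:ℝ) ≠ 0 := by exact_mod_cast (n-j).factorial_ne_zero
  field_simp
  linear_combination -hfac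

end AuxPoly

open PowerSeries Finset

noncomputable def Bser : PowerSeries ℝ :=
  PowerSeries.mk fun n => (n:ℝ)^n / (n.factorial : ℝ)

lemma constW : PowerSeries.constantCoeff (treeW ℝ) = 0 := by
  rw [← PowerSeries.coeff_zero_eq_constantCoeff_apply]
  simp [treeW]

lemma mul_one_key : (1 - treeW ℝ) * Bser = 1 := by
  ext n
  rw [sub_mul, one_mul, map_sub, PowerSeries.coeff_mul,
    Finset.Nat.sum_antidiagonal_eq_sum_range_succ_mk]
  rcases n with _ | n
  · simp [Bser, treeW]
  · rw [PowerSeries.coeff_one, if_neg (Nat.succ_ne_zero n), Finset.sum_range_succ']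
    have hf0 : PowerSeries.coeff 0 (treeW ℝ) * PowerSeries.coeff (n+1-0) Bser = 0 := by
      simp [treeW]
    rw [hf0, add_zero]
    have hterm : ∀ i ∈ range (n+1),
        PowerSeries.coeff (i+1) (treeW ℝ) * PowerSeries.coeff (n+1-(i+1)) Bser
          = ((i+1:ℕ):ℝ)^i/((i+1).factorial:ℝ) * (((n-i:ℕ):ℝ)^(n-i)/((n-i).factorial:ℝ)) := by
      intro i _
      simp only [treeW, Bser, PowerSeries.coeff_mk, if_neg (Nat.succ_ne_zero i)]
      rw [show (i+1)-1 = i from rfl, show n+1-(i+1) = n-i by omega]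
    rw [Finset.sum_congr rfl hterm]
    have hkey := key_div (n+1) (by omega)
    rw [← Finset.Ico_add_one_right_eq_Icc, Finset.sum_Ico_eq_sum_range] at hkey
    have hconv : ∀ i ∈ range (n+1),
        ((1+i:ℕ):ℝ)^((1+i)-1)/(((1+i).factorial:ℝ)) * ((((n+1)-(1+i):ℕ):ℝ)^((n+1)-(1+i))/(((n+1)-(1+i)).factorial:ℝ))
          = ((i+1:ℕ):ℝ)^i/((i+1).factorial:ℝ) * (((n-i:ℕ):ℝ)^(n-i)/((n-i).factorial:ℝ)) := by
      intro i _
      rw [show (1+i) = i+1 by omega, show (n+1)-(i+1) = n-i by omega]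
      norm_num
    simp only [Nat.add_sub_cancel] at hkey
    rw [Finset.sum_congr rfl hconv] at hkey
    rw [hkey, Bser, PowerSeries.coeff_mk]
    ring

lemma B_eq_inv : Bser = (1 - treeW ℝ)⁻¹ := by
  rw [PowerSeries.eq_inv_iff_mul_eq_one, mul_comm]
  · exact mul_one_key
  · rw [map_sub, map_one, constW, sub_zero]
    exact one_ne_zero

lemma WB : treeW ℝ * (1 - treeW ℝ)⁻¹ = Bser - 1 := by
  rw [← B_eq_inv]
  linear_combination -mul_one_key

lemma coeff_derivativeFun' (f : PowerSeries ℝ) (n : ℕ) :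
    PowerSeries.coeff n f.derivativeFun = PowerSeries.coeff (n + 1) f * (n + 1) :=
  PowerSeries.coeff_derivative f n

lemma part2 : PowerSeries.X * PowerSeries.derivativeFun (treeW ℝ)
    = treeW ℝ * (1 - treeW ℝ)⁻¹ := by
  rw [WB]
  ext n
  rcases n with _ | n
  · rw [PowerSeries.coeff_zero_X_mul, map_sub, PowerSeries.coeff_one]
    simp [Bser]
  · rw [PowerSeries.coeff_succ_X_mul, coeff_derivativeFun', map_sub,
      PowerSeries.coeff_one, if_neg (Nat.succ_ne_zero n)]
    simp only [treeW, Bser, PowerSeries.coeff_mk, if_neg (Nat.succ_ne_zero n),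
      Nat.succ_sub_one, sub_zero]
    push_cast
    rw [pow_succ]
    ring

lemma coeff_op (f : PowerSeries ℝ) (x : ℝ) (n : ℕ) :
    PowerSeries.coeff n (PowerSeries.X * PowerSeries.derivativeFun f + x • f)
      = (x + n) * PowerSeries.coeff n f := by
  rw [map_add, PowerSeries.coeff_smul, smul_eq_mul]
  rcases n with _ | n
  · rw [PowerSeries.coeff_zero_X_mul]
    push_cast
    ring
  · rw [PowerSeries.coeff_succ_X_mul, coeff_derivativeFun']
    push_cast
    ring

lemma coeff_iter (x : ℝ) (k : ℕ) (f : PowerSeries ℝ) (n : ℕ) :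
    PowerSeries.coeff n
        ((fun f => PowerSeries.X * PowerSeries.derivativeFun f + x • f)^[k] f)
      = (x + n)^k * PowerSeries.coeff n f := by
  induction k with
  | zero => simp
  | succ k ih =>
    rw [Function.iterate_succ_apply', coeff_op, ih, pow_succ]
    ring

theorem stmt17 (k : ℕ) (x : ℝ) :
    (PowerSeries.mk fun n =>
        if n = 0 then 0 else (n : ℝ) ^ (n + 1) / (n.factorial : ℝ) * (x + n) ^ k)
      = (fun f => PowerSeries.X * PowerSeries.derivativeFun f + x • f)^[k]
          (PowerSeries.X * PowerSeries.derivativeFun ((1 - treeW ℝ)⁻¹))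
    ∧ PowerSeries.X * PowerSeries.derivativeFun (treeW ℝ) = treeW ℝ * (1 - treeW ℝ)⁻¹ := by
  constructor
  · ext n
    rw [PowerSeries.coeff_mk, coeff_iter, ← B_eq_inv]
    rcases n with _ | n
    · rw [PowerSeries.coeff_zero_X_mul, if_pos rfl]
      ring
    · rw [PowerSeries.coeff_succ_X_mul, coeff_derivativeFun',
        if_neg (Nat.succ_ne_zero n)]
      simp only [Bser, PowerSeries.coeff_mk]
      push_cast
      rw [pow_succ]
      ring
  · exact part2
end
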